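/- Local character of Krull dimension with respect to comaximal monoids. Let R be a commutative ring and S₁,…,S_n comaximal submonoids of R. Then for any integer ℓ, the Krull dimension of R is at most ℓ if and only if for each i = 1,…,n the Krull dimension of the localization of R at S_i is at most ℓ. -/

import Mathlib

theorem stmt_9 {R : Type*} [CommRing R] {n : ℕ} (S : Fin n → Submonoid R)
    (hco : ∀ s : Fin n → R, (∀ i, s i ∈ S i) →
      ∃ a : Fin n → R, ∑ i, a i * s i = 1) (ℓ : ℕ) :
    ringKrullDim R ≤ (ℓ : WithBot ℕ∞) ↔
      ∀ i, ringKrullDim (Localization (S i)) ≤ (ℓ : WithBot ℕ∞) := by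
  constructor
  · intro h i
    refine le_trans ?_ h
    apply Order.krullDim_le_of_strictMono
      (PrimeSpectrum.comap (algebraMap R (Localization (S i))))
    intro p q hpq
    refine lt_of_le_of_ne ?_ ?_
    · rw [← PrimeSpectrum.asIdeal_le_asIdeal]
      exact fun x hx => Ideal.mem_comap.mpr (hpq.le (Ideal.mem_comap.mp hx))
    · exact fun hc => hpq.ne (PrimeSpectrum.localization_comap_injective _ (S i) hc)
  · intro h
    rw [ringKrullDim, Order.krullDim]
    refine iSup_le fun p => ?_
    -- find i with S i disjoint from the top prime of the chain
    have hex : ∃ i, Disjoint ((S i : Set R)) (p.last.asIdeal : Set R) := by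
      by_contra hc
      push_neg at hc
      choose s hs1 hs2 using fun i => Set.not_disjoint_iff.mp (hc i)
      obtain ⟨a, ha⟩ := hco s hs1
      have h1 : (1 : R) ∈ p.last.asIdeal := by
        rw [← ha]
        exact Ideal.sum_mem _ fun i _ => Ideal.mul_mem_left _ _ (hs2 i)
      exact p.last.isPrime.ne_top (Ideal.eq_top_iff_one _ |>.mpr h1)
    obtain ⟨i, hdisj⟩ := hex
    have hdisj' : ∀ j, Disjoint ((S i : Set R)) ((p j).asIdeal : Set R) := fun j => by
      refine hdisj.mono_right ?_
      have : p j ≤ p.last := p.monotone (Fin.le_last j)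
      exact fun x hx => (PrimeSpectrum.asIdeal_le_asIdeal _ _).mpr this hx
    let e := (IsLocalization.orderIsoOfPrime (S i) (Localization (S i))).symm
    let q : LTSeries (PrimeSpectrum (Localization (S i))) :=
      { length := p.length
        toFun := fun j => ⟨(e ⟨(p j).asIdeal, (p j).isPrime, hdisj' j⟩).1,
          (e ⟨(p j).asIdeal, (p j).isPrime, hdisj' j⟩).2⟩
        step := fun j => by
          show (_ : PrimeSpectrum (Localization (S i))) < _
          rw [← PrimeSpectrum.asIdeal_lt_asIdeal]
          exact e.strictMono (Subtype.mk_lt_mk.mpr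
            ((PrimeSpectrum.asIdeal_lt_asIdeal _ _).mpr (p.step j))) }
    have hq : (q.length : WithBot ℕ∞) ≤ Order.krullDim (PrimeSpectrum (Localization (S i))) :=
      le_iSup (fun r : LTSeries (PrimeSpectrum (Localization (S i))) => (r.length : WithBot ℕ∞)) q
    calc (p.length : WithBot ℕ∞) = q.length := rfl
      _ ≤ _ := hq
      _ ≤ (ℓ : WithBot ℕ∞) := h i
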